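/- Let S be a quasi-Eberlein family with decomposition S = ∪_n S_n. Then the Eberleinization SE = { (1/n)·χ_s : s ∈ S_n } is a closed subset of [0,1]^Γ in the product topology. -/

import Mathlib

open Set Filter Topology
open scoped Classical

variable {Γ : Type*}

/-- Sum of a finitely supported function `φ` over a set `s` (i.e. `s*(φ) = Σ_{a∈s} φ(a)`). -/
noncomputable def segSum (s : Set Γ) (φ : Γ →₀ ℝ) : ℝ :=
  ∑ a ∈ φ.support, if a ∈ s then φ a else 0

/-- The candidate values `(Σ_i (Σ_{a∈s_i} φ(a))²)^{1/2}` over finite pairwise disjoint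
families `{s_1,…,s_n} ⊆ S`. -/
noncomputable def jamesSet (S : Set (Set Γ)) (φ : Γ →₀ ℝ) : Set ℝ :=
  { r | ∃ F : Finset (Set Γ), ↑F ⊆ S ∧ (F : Set (Set Γ)).Pairwise Disjoint ∧
      r = Real.sqrt (∑ s ∈ F, (segSum s φ) ^ 2) }

/-- The James-`S` norm on finitely supported functions. -/
noncomputable def jamesNorm (S : Set (Set Γ)) (φ : Γ →₀ ℝ) : ℝ :=
  sSup (jamesSet S φ)

/-- The characteristic function of a set, viewed in `Γ → ℝ`. -/
noncomputable def indicatorFun (s : Set Γ) : Γ → ℝ := s.indicator fun _ => 1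

/-- A family of subsets of `Γ` is countably intersected (Definition 1.1). -/
structure IsCI (S : Set (Set Γ)) : Prop where
  /-- (a) pointwise closed -/
  closed : IsClosed (indicatorFun '' S)
  /-- (a) members countable -/
  countable : ∀ s ∈ S, s.Countable
  /-- (a) contains singletons -/
  singletons : ∀ γ : Γ, {γ} ∈ S
  /-- (b) differences are finite disjoint unions of members -/
  diff : ∀ s ∈ S, ∀ t ∈ S, ∃ F : Finset (Set Γ), ↑F ⊆ S ∧
    (F : Set (Set Γ)).Pairwise Disjoint ∧ s \ t = ⋃₀ ↑F
  /-- (c) the enveloping condition -/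
  env : ∃ st : Set Γ → Set Γ, (∀ t ∈ S, st t ∈ S ∧ t ⊆ st t) ∧
    ∀ s ∈ S, ∀ n : ℕ, ∀ ts : Fin n → Set Γ, (∀ i, ts i ∈ S) →
      ∃ t ∈ S, t ⊆ s \ (⋃ i, st (ts i)) ∧ (s \ ((⋃ i, st (ts i)) ∪ t)).Finite
  /-- (d) each `L_s = {s ∩ t : t ∈ S}` is countable -/
  inter_countable : ∀ s ∈ S, { u : Set Γ | ∃ t ∈ S, u = s ∩ t }.Countable

/-- Pairing of a "dual vector" `g : Γ → ℝ` with a finitely supported function. -/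
noncomputable def dPair (g : Γ → ℝ) (φ : Γ →₀ ℝ) : ℝ := ∑ a ∈ φ.support, φ a * g a

/-- The unit ball of the dual of `JS`, modelled as those `g : Γ → ℝ` whose pairing with every
finitely supported function is dominated by the James-`S` norm; the product topology on
`Γ → ℝ` is the weak-star topology on this ball. -/
def dualBall (S : Set (Set Γ)) : Set (Γ → ℝ) :=
  { g | ∀ φ : Γ →₀ ℝ, |dPair g φ| ≤ jamesNorm S φ }

/-- The dual norm of `g` as a functional on `(Φ, ‖·‖_{J-S})`. -/
noncomputable def dualNorm (S : Set (Set Γ)) (g : Γ → ℝ) : ℝ :=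
  sSup { r | ∃ φ : Γ →₀ ℝ, jamesNorm S φ ≤ 1 ∧ r = |dPair g φ| }

/-- The set `D = {Σ_{i=1}^n λ_i s_i* : s_i ∈ S pairwise disjoint, Σ λ_i² ≤ 1}`. -/
def Dset (S : Set (Set Γ)) : Set (Γ → ℝ) :=
  { g | ∃ (n : ℕ) (l : Fin n → ℝ) (s : Fin n → Set Γ), (∀ i, s i ∈ S) ∧
      Pairwise (Function.onFun Disjoint s) ∧ (∑ i, l i ^ 2) ≤ 1 ∧
      g = fun γ => ∑ i, if γ ∈ s i then l i else 0 }


/-- A quasi-Eberlein decomposition (Definition 3.1) of a family `S` of subsets of `Γ`: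
`S` is a pointwise closed family of countable sets containing the singletons, each member is
an increasing union of finite members, `S = ⋃_n S_n` with each `S_n` pointwise closed
(standing in for Eberlein compact) and the `S_n` pairwise disjoint, `Γ ⊆ S_1`, and the
combinatorial partition property (iii) holds.  (`Sn n` plays the role of `S_{n+1}`.) -/
structure QEDecomp (S : Set (Set Γ)) (Sn : ℕ → Set (Set Γ)) : Prop where
  closed : IsClosed (indicatorFun '' S)
  countable : ∀ s ∈ S, s.Countable
  singletons : ∀ γ : Γ, {γ} ∈ S
  incr : ∀ s ∈ S, ∃ t : ℕ → Set Γ, (∀ n, t n ∈ S ∧ (t n).Finite) ∧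
    Monotone t ∧ s = ⋃ n, t n
  union : S = ⋃ n, Sn n
  sn_closed : ∀ n, IsClosed (indicatorFun '' Sn n)
  sn_disjoint : Pairwise (Function.onFun Disjoint Sn)
  gamma_sub : ∀ γ : Γ, {γ} ∈ Sn 0
  part : ∀ P : Set (Set Γ), (∀ p ∈ P, p.Countable) → P.Pairwise Disjoint →
    ⋃₀ P = Set.univ → ∀ Q : ℕ → Set Γ, (⋃ n, Q n) = Set.univ →
      ∃ s ∈ S, ∃ n₀ : ℕ, (s ∩ Q n₀).Infinite ∧ ∀ p ∈ P, (s ∩ p).Subsingleton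

lemma qe_indicator_smul {Γ : Type*} (s : Set Γ) (c : ℝ) :
    (Set.indicator s fun _ => c) = c • indicatorFun s := by
  funext γ
  by_cases hγ : γ ∈ s <;> simp [indicatorFun, Set.indicator_apply, hγ]

/-- The Eberleinization `SE = {(1/n)·χ_s : s ∈ S_n}` of a quasi-Eberlein family is a closed
subset of `[0,1]^Γ` in the product topology. -/
theorem stmt17 {Γ : Type*} (S : Set (Set Γ)) (Sn : ℕ → Set (Set Γ))
    (h : QEDecomp S Sn) :
    (∀ g ∈ { g : Γ → ℝ | ∃ n : ℕ, ∃ s ∈ Sn n,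
        g = Set.indicator s fun _ => (1 : ℝ) / (n + 1) },
      ∀ γ, g γ ∈ Set.Icc (0 : ℝ) 1) ∧
    IsClosed { g : Γ → ℝ | ∃ n : ℕ, ∃ s ∈ Sn n,
      g = Set.indicator s fun _ => (1 : ℝ) / (n + 1) } := by
  classical
  constructor
  · rintro g ⟨n, s, hs, rfl⟩ γ
    by_cases hγ : γ ∈ s <;> simp only [Set.indicator_apply, hγ, if_true, if_false]
    · constructor
      · positivity
      · rw [div_le_one (by positivity)]
        have : (0:ℝ) ≤ (n:ℝ) := Nat.cast_nonneg n
        linarith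
    · exact ⟨le_refl 0, zero_le_one⟩
  · set E : Set (Γ → ℝ) := { g : Γ → ℝ | ∃ n : ℕ, ∃ s ∈ Sn n,
      g = Set.indicator s fun _ => (1 : ℝ) / (n + 1) } with hE
    -- each slice is closed
    have hAn : ∀ n : ℕ, IsClosed { g : Γ → ℝ | ∃ s ∈ Sn n,
        g = Set.indicator s fun _ => (1 : ℝ) / (n + 1) } := by
      intro n
      have hc : ((1 : ℝ) / (n + 1)) ≠ 0 := by positivity
      have heq : { g : Γ → ℝ | ∃ s ∈ Sn n, g = Set.indicator s fun _ => (1 : ℝ) / (n + 1) }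
          = (Homeomorph.smulOfNeZero ((1 : ℝ) / (n + 1)) hc) '' (indicatorFun '' Sn n) := by
        have key : ∀ f : Γ → ℝ,
            (Homeomorph.smulOfNeZero ((1 : ℝ) / (n + 1)) hc) f = ((1:ℝ)/(n+1)) • f :=
          fun f => rfl
        ext g
        simp only [Set.mem_setOf_eq, Set.mem_image, exists_exists_and_eq_and, key]
        constructor
        · rintro ⟨s, hs, rfl⟩
          exact ⟨s, hs, (qe_indicator_smul s ((1:ℝ)/(n+1))).symm⟩
        · rintro ⟨s, hs, hsg⟩
          exact ⟨s, hs, hsg ▸ (qe_indicator_smul s ((1:ℝ)/(n+1))).symm⟩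
      rw [heq]
      exact (Homeomorph.isClosed_image _).mpr (h.sn_closed n)
    apply isClosed_of_closure_subset
    intro g hg
    by_cases hg0 : ∃ γ, g γ ≠ 0
    · -- nonzero case: pin down the index n
      obtain ⟨γ₀, hγ₀⟩ := hg0
      -- the possible values form a closed set
      have hV : IsClosed (insert (0:ℝ) (Set.range fun k : ℕ => (1:ℝ)/(k+1))) := by
        have ht : Tendsto (fun k : ℕ => (1:ℝ)/(k+1)) cofinite (𝓝 0) := by
          rw [Nat.cofinite_eq_atTop]
          exact tendsto_one_div_add_atTop_nhds_zero_nat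
        exact ht.isCompact_insert_range_of_cofinite.isClosed
      have hsubV : E ⊆ { f : Γ → ℝ | f γ₀ ∈ insert (0:ℝ) (Set.range fun k : ℕ => (1:ℝ)/(k+1)) } := by
        rintro f ⟨m, s, hs, rfl⟩
        by_cases hm : γ₀ ∈ s <;>
          simp only [Set.mem_setOf_eq, Set.indicator_apply, hm, if_true, if_false]
        · exact Set.mem_insert_of_mem _ ⟨m, rfl⟩
        · exact Set.mem_insert _ _
      have hgV : g γ₀ ∈ insert (0:ℝ) (Set.range fun k : ℕ => (1:ℝ)/(k+1)) :=
        closure_minimal hsubV (hV.preimage (continuous_apply γ₀)) hg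
      rcases hgV with h0 | ⟨n, hn⟩
      · exact absurd h0 hγ₀
      -- now g γ₀ = 1/(n+1)
      set ε : ℝ := 1 / (((n:ℝ)+1) * ((n:ℝ)+2)) with hε
      have hεpos : 0 < ε := by positivity
      set U : Set (Γ → ℝ) := { f | |f γ₀ - (1:ℝ)/(n+1)| < ε } with hU
      have hUopen : IsOpen U := by
        have : U = (fun f : Γ → ℝ => f γ₀) ⁻¹' (Metric.ball ((1:ℝ)/(n+1)) ε) := by
          ext f; simp [hU, Metric.mem_ball, Real.dist_eq]
        rw [this]
        exact (Metric.isOpen_ball).preimage (continuous_apply γ₀)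
      have hgU : g ∈ U := by
        simp only [hU, Set.mem_setOf_eq, hn, sub_self, abs_zero]
        exact hεpos
      have hmem : g ∈ closure (U ∩ E) :=
        hUopen.inter_closure ⟨hgU, hg⟩
      have hsubA : U ∩ E ⊆ { f : Γ → ℝ | ∃ s ∈ Sn n,
          f = Set.indicator s fun _ => (1 : ℝ) / (n + 1) } := by
        rintro f ⟨hfU, m, s, hs, rfl⟩
        have hval : Set.indicator s (fun _ => (1 : ℝ) / (m + 1)) γ₀ = 0 ∨
            Set.indicator s (fun _ => (1 : ℝ) / (m + 1)) γ₀ = 1/(m+1) := by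
          by_cases hm : γ₀ ∈ s <;> simp [Set.indicator_apply, hm]
        have hεle : ε ≤ (1:ℝ)/(n+1) := by
          rw [hε, div_le_div_iff₀ (by positivity) (by positivity)]
          nlinarith [Nat.cast_nonneg (α := ℝ) n]
        have hmn : m = n := by
          rcases hval with hv | hv
          · exfalso
            rw [hU, Set.mem_setOf_eq, hv, zero_sub, abs_neg,
              abs_of_nonneg (by positivity)] at hfU
            linarith
          · rw [hU, Set.mem_setOf_eq, hv] at hfU
            by_contra hne
            rcases lt_or_gt_of_ne hne with hlt | hgt
            · -- m < n, so 1/(m+1) ≥ 1/n > 1/(n+1) with gap ≥ 1/(n(n+1)) > ε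
              have hnpos0 : 0 < n := Nat.lt_of_le_of_lt (Nat.zero_le m) hlt
              have hnpos : (0:ℝ) < (n:ℝ) := by exact_mod_cast hnpos0
              have hmn' : (m:ℝ) + 1 ≤ (n:ℝ) := by exact_mod_cast Nat.succ_le_of_lt hlt
              have h1 : (1:ℝ)/(n:ℝ) ≤ 1/((m:ℝ)+1) :=
                one_div_le_one_div_of_le (by positivity) hmn'
              have h2 : (1:ℝ)/((n:ℝ)+1) + 1/((n:ℝ)*((n:ℝ)+1)) = 1/(n:ℝ) := by
                field_simp
              have h3 : ε < 1/((n:ℝ)*((n:ℝ)+1)) := by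
                rw [hε]
                apply one_div_lt_one_div_of_lt (by positivity)
                nlinarith
              have habs : (1:ℝ)/((m:ℝ)+1) - 1/((n:ℝ)+1) < ε := by
                calc (1:ℝ)/((m:ℝ)+1) - 1/((n:ℝ)+1) ≤ |1/((m:ℝ)+1) - 1/((n:ℝ)+1)| := le_abs_self _
                _ < ε := by exact_mod_cast hfU
              linarith
            · -- m > n, so 1/(m+1) ≤ 1/(n+2), gap ≥ ε
              have hmn' : (n:ℝ) + 2 ≤ (m:ℝ) + 1 := by
                have : n + 1 ≤ m := hgt
                exact_mod_cast by exact_mod_cast Nat.add_le_add_right this 1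
              have h1 : (1:ℝ)/((m:ℝ)+1) ≤ 1/((n:ℝ)+2) :=
                one_div_le_one_div_of_le (by positivity) hmn'
              have h2 : (1:ℝ)/((n:ℝ)+1) - 1/((n:ℝ)+2) = ε := by
                rw [hε]
                field_simp
                ring
              have habs : (1:ℝ)/((n:ℝ)+1) - 1/((m:ℝ)+1) < ε := by
                calc (1:ℝ)/((n:ℝ)+1) - 1/((m:ℝ)+1) ≤ |1/((m:ℝ)+1) - 1/((n:ℝ)+1)| := by
                      rw [abs_sub_comm]; exact le_abs_self _
                _ < ε := by exact_mod_cast hfU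
              linarith
        subst hmn
        exact ⟨s, hs, rfl⟩
      have : g ∈ { f : Γ → ℝ | ∃ s ∈ Sn n, f = Set.indicator s fun _ => (1 : ℝ) / (n + 1) } :=
        (hAn n).closure_subset ((closure_mono hsubA) hmem)
      obtain ⟨s, hs, hgs⟩ := this
      exact ⟨n, s, hs, hgs⟩
    · -- g = 0 everywhere; show 0 ∈ E
      push_neg at hg0
      have hgzero : g = fun _ => (0:ℝ) := funext hg0
      by_cases hfin : (Set.univ : Set Γ).Finite
      · -- finite Γ contradicts the partition property
        exfalso
        obtain ⟨s, -, n₀, hinf, -⟩ := h.part {Set.univ}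
          (by rintro p rfl; exact hfin.countable)
          (Set.pairwise_singleton _ _)
          (by simp)
          (fun _ => Set.univ) (Set.iUnion_const _)
        exact hinf ((hfin.subset (Set.inter_subset_right)))
      · -- infinite Γ: 0 is a cofinite limit of singleton indicators, so ∅ ∈ S
        have hΓinf : Infinite Γ := Set.infinite_univ_iff.mp hfin
        have ht : Tendsto (fun γ : Γ => indicatorFun ({γ} : Set Γ)) cofinite
            (𝓝 (fun _ => (0:ℝ))) := by
          rw [tendsto_pi_nhds]
          intro δ
          have hev : (fun γ : Γ => indicatorFun ({γ} : Set Γ) δ) =ᶠ[cofinite]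
              (fun _ => (0:ℝ)) := by
            apply Filter.eventually_cofinite.mpr
            apply Set.Finite.subset (Set.finite_singleton δ)
            intro γ hγ
            simp only [Set.mem_setOf_eq, indicatorFun, Set.indicator_apply,
              Set.mem_singleton_iff] at hγ
            by_contra hne
            simp only [Set.mem_singleton_iff] at hne
            rw [if_neg (fun hh => hne hh.symm)] at hγ
            exact hγ rfl
          exact Tendsto.congr' hev.symm tendsto_const_nhds
        have hmem0 : (fun _ => (0:ℝ)) ∈ closure (indicatorFun '' S) := by
          apply mem_closure_of_tendsto ht
          filter_upwards with γ
          exact ⟨{γ}, h.singletons γ, rfl⟩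
        have h0S : (fun _ => (0:ℝ)) ∈ indicatorFun '' S :=
          h.closed.closure_subset hmem0
        obtain ⟨s, hsS, hs0⟩ := h0S
        have hsempty : s = ∅ := by
          by_contra hne
          obtain ⟨γ, hγ⟩ := Set.nonempty_iff_ne_empty.mpr hne
          have := congrFun hs0 γ
          simp [indicatorFun, Set.indicator_apply, hγ] at this
        have : s ∈ ⋃ n, Sn n := h.union ▸ hsS
        obtain ⟨m, hm⟩ := Set.mem_iUnion.mp this
        refine ⟨m, s, hm, ?_⟩
        rw [hgzero, hsempty]
        simp
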